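/- For every positive integer i, the series of off-diagonal Gram entries satisfies Σ_{j∈ℕ, j≠i} 3·⟨𝒞_i, 𝒞_j⟩ ≤ 1/2 (all terms are nonnegative and the series converges); equivalently, Σ_{j=1}^∞ 3·⟨𝒞_i, 𝒞_j⟩ ≤ 3/2. The same bound holds with absolute values for the 𝒮-functions: Σ_{j∈ℕ, j≠i} 3·|⟨𝒮_i, 𝒮_j⟩| ≤ 1/2. -/

import Mathlib

open MeasureTheory Filter Topology

noncomputable def Cfun (x : ℝ) : ℝ := 4 * |Int.fract x - 1 / 2| - 1

noncomputable def Sfun (x : ℝ) : ℝ := abs (2 - 4 * |Int.fract x - 1 / 4|) - 1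

namespace GramAux

open Real Set intervalIntegral

noncomputable def aa (k : ℕ) : ℝ := 8 / (π ^ 2 * (2 * (k : ℝ) + 1) ^ 2)

lemma aa_nonneg (k : ℕ) : 0 ≤ aa k := by
  have : (0:ℝ) < π ^ 2 * (2 * (k : ℝ) + 1) ^ 2 := by positivity
  unfold aa; positivity

lemma odd_hasSum {f : ℕ → ℝ} {S E : ℝ} (hf : HasSum f S)
    (he : HasSum (fun k => f (2 * k)) E) :
    HasSum (fun k => f (2 * k + 1)) (S - E) := by
  obtain ⟨x, hx⟩ : Summable fun k => f (2 * k + 1) :=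
    hf.summable.comp_injective (fun a b h => by omega)
  have h2 := he.even_add_odd hx
  have hx' : E + x = S := h2.unique hf
  have : x = S - E := by linarith
  rwa [this] at hx

lemma hasSum_B2 {x : ℝ} (hx : x ∈ Icc (0:ℝ) 1) :
    HasSum (fun n : ℕ => 1 / (n : ℝ) ^ 2 * Real.cos (2 * π * n * x))
      (π ^ 2 * (x ^ 2 - x + 1 / 6)) := by
  have h := hasSum_one_div_nat_pow_mul_cos one_ne_zero hx
  have hval : (Polynomial.map (algebraMap ℚ ℝ) (Polynomial.bernoulli 2)).eval x
      = x ^ 2 - x + 1 / 6 := by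
    simp_rw [Polynomial.bernoulli, Finset.sum_range_succ, Finset.sum_range_zero,
      Polynomial.map_add, Polynomial.map_zero, Polynomial.map_monomial,
      Polynomial.eval_add, Polynomial.eval_zero, Polynomial.eval_monomial, zero_add]
    rw [bernoulli_eq_bernoulli'_of_ne_one (by decide : (0:ℕ) ≠ 1), bernoulli'_zero,
      bernoulli_one,
      bernoulli_eq_bernoulli'_of_ne_one (by decide : (2:ℕ) ≠ 1), bernoulli'_two]
    push_cast
    norm_num
    ring
  convert h using 2 with n
  · norm_num [Nat.factorial]
  · ring
  · norm_num [hval]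

lemma hasSum_odd_sq : HasSum (fun k : ℕ => 1 / (2 * (k : ℝ) + 1) ^ 2) (π ^ 2 / 8) := by
  have he : HasSum (fun k : ℕ => 1 / ((2 * k : ℕ) : ℝ) ^ 2) (π ^ 2 / 24) := by
    have h := hasSum_zeta_two.mul_left (1 / 4 : ℝ)
    have : (π ^ 2 / 24) = 1 / 4 * (π ^ 2 / 6) := by ring
    rw [this]
    convert h using 1
    rfl
    funext k
    push_cast
    rcases Nat.eq_zero_or_pos k with hk | hk
    · simp [hk]
    · have : (k : ℝ) ≠ 0 := Nat.cast_ne_zero.mpr hk.ne'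
      field_simp
      ring
  have h := odd_hasSum hasSum_zeta_two he
  have hv : π ^ 2 / 6 - π ^ 2 / 24 = π ^ 2 / 8 := by ring
  rw [hv] at h
  convert h using 1
  funext k
  push_cast
  norm_num

lemma hasSum_odd_four : HasSum (fun k : ℕ => 1 / (2 * (k : ℝ) + 1) ^ 4) (π ^ 4 / 96) := by
  have he : HasSum (fun k : ℕ => 1 / ((2 * k : ℕ) : ℝ) ^ 4) (π ^ 4 / 1440) := by
    have h := hasSum_zeta_four.mul_left (1 / 16 : ℝ)
    have : (π ^ 4 / 1440) = 1 / 16 * (π ^ 4 / 90) := by ring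
    rw [this]
    convert h using 1
    rfl
    funext k
    push_cast
    rcases Nat.eq_zero_or_pos k with hk | hk
    · simp [hk]
    · have : (k : ℝ) ≠ 0 := Nat.cast_ne_zero.mpr hk.ne'
      field_simp
      ring
  have h := odd_hasSum hasSum_zeta_four he
  have hv : π ^ 4 / 90 - π ^ 4 / 1440 = π ^ 4 / 96 := by ring
  rw [hv] at h
  convert h using 1
  funext k
  push_cast
  norm_num

lemma hasSum_aa : HasSum aa 1 := by
  have h := hasSum_odd_sq.mul_left (8 / π ^ 2)
  have hπ : (π : ℝ) ≠ 0 := Real.pi_ne_zero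
  have hv : (8 / π ^ 2) * (π ^ 2 / 8) = 1 := by field_simp
  rw [hv] at h
  convert h using 1
  rfl
  funext k
  unfold aa
  have h1 : (2 * (k : ℝ) + 1) ^ 2 ≠ 0 := by positivity
  field_simp

lemma hasSum_aasq : HasSum (fun k => aa k * aa k / 2) (1 / 3) := by
  have h := hasSum_odd_four.mul_left (32 / π ^ 4)
  have hπ : (π : ℝ) ≠ 0 := Real.pi_ne_zero
  have hv : (32 / π ^ 4) * (π ^ 4 / 96) = 1 / 3 := by field_simp; ring
  rw [hv] at h
  convert h using 1
  rfl
  funext k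
  unfold aa
  have h1 : (2 * (k : ℝ) + 1) ^ 2 ≠ 0 := by positivity
  field_simp
  ring

lemma abs_Cfun_le (x : ℝ) : |Cfun x| ≤ 1 := by
  unfold Cfun
  have h0 : 0 ≤ Int.fract x := Int.fract_nonneg x
  have h1 : Int.fract x < 1 := Int.fract_lt_one x
  rw [abs_le]
  constructor
  · have : 0 ≤ |Int.fract x - 1 / 2| := abs_nonneg _
    linarith
  · have : |Int.fract x - 1 / 2| ≤ 1 / 2 := by
      rw [abs_le]; constructor <;> linarith
    linarith

lemma measurable_Cfun : Measurable Cfun := by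
  unfold Cfun
  exact (((measurable_fract.sub_const (1 / 2)).abs.const_mul 4).sub_const 1)

lemma hasSum_C (x : ℝ) :
    HasSum (fun k : ℕ => aa k * Real.cos (2 * π * (2 * (k : ℝ) + 1) * x)) (Cfun x) := by
  set t := Int.fract x with htdef
  have ht0 : 0 ≤ t := Int.fract_nonneg x
  have ht1 : t < 1 := Int.fract_lt_one x
  have hxt : x = t + (⌊x⌋ : ℝ) := by rw [htdef, Int.fract]; ring
  have hcos : ∀ k : ℕ, Real.cos (2 * π * (2 * (k : ℝ) + 1) * x)
      = Real.cos (2 * π * (2 * (k : ℝ) + 1) * t) := by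
    intro k
    conv_lhs => rw [hxt]
    have harg : 2 * π * (2 * (k : ℝ) + 1) * (t + (⌊x⌋ : ℝ))
        = 2 * π * (2 * (k : ℝ) + 1) * t + (((2 * k + 1 : ℕ) : ℤ) * ⌊x⌋ : ℤ) * (2 * π) := by
      push_cast; ring
    rw [harg, Real.cos_add_int_mul_two_pi]
  have hCx : Cfun x = 4 * |t - 1 / 2| - 1 := by unfold Cfun; rw [htdef]
  have h1 : HasSum (fun n : ℕ => 1 / (n : ℝ) ^ 2 * Real.cos (2 * π * n * t))
      (π ^ 2 * (t ^ 2 - t + 1 / 6)) := hasSum_B2 ⟨ht0, ht1.le⟩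
  have key : ∀ u : ℝ, u ∈ Icc (0:ℝ) 1 → ∀ m : ℤ, 2 * t = u + m →
      HasSum (fun k : ℕ => aa k * Real.cos (2 * π * (2 * (k : ℝ) + 1) * x))
        (8 / π ^ 2 * (π ^ 2 * (t ^ 2 - t + 1 / 6) - 1 / 4 * (π ^ 2 * (u ^ 2 - u + 1 / 6)))) := by
    intro u hu m hum
    have he : HasSum (fun k : ℕ =>
        1 / ((2 * k : ℕ) : ℝ) ^ 2 * Real.cos (2 * π * ((2 * k : ℕ) : ℝ) * t))
        (1 / 4 * (π ^ 2 * (u ^ 2 - u + 1 / 6))) := by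
      have h2 := (hasSum_B2 hu).mul_left (1 / 4)
      convert h2 using 1
      rfl
      funext k
      have hcu : Real.cos (2 * π * ((2 * k : ℕ) : ℝ) * t) = Real.cos (2 * π * (k : ℝ) * u) := by
        have harg : 2 * π * ((2 * k : ℕ) : ℝ) * t
            = 2 * π * (k : ℝ) * u + ((k : ℤ) * m : ℤ) * (2 * π) := by
          push_cast
          linear_combination (2 * π * (k:ℝ)) * hum
        rw [harg, Real.cos_add_int_mul_two_pi]
      rw [hcu]
      rcases Nat.eq_zero_or_pos k with hk | hk
      · simp [hk]
      · have hkne : ((k:ℝ)) ≠ 0 := Nat.cast_ne_zero.mpr hk.ne'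
        have hrw : ((2 * k : ℕ) : ℝ) = 2 * (k:ℝ) := by push_cast; ring
        rw [hrw]
        have hq : (1:ℝ) / (2 * (k:ℝ)) ^ 2 = 1 / 4 * (1 / (k:ℝ) ^ 2) := by
          field_simp; ring
        rw [hq]; ring
    have hodd := odd_hasSum h1 he
    have h3 := hodd.mul_left (8 / π ^ 2)
    have hfun : (fun k : ℕ => 8 / π ^ 2 * (1 / ((2 * k + 1 : ℕ) : ℝ) ^ 2
          * Real.cos (2 * π * ((2 * k + 1 : ℕ) : ℝ) * t)))
        = fun k : ℕ => aa k * Real.cos (2 * π * (2 * (k : ℝ) + 1) * x) := by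
      funext k
      rw [hcos k]
      unfold aa
      push_cast
      have hne : (2 * (k : ℝ) + 1) ^ 2 ≠ 0 := by positivity
      have hπ : (π : ℝ) ≠ 0 := Real.pi_ne_zero
      field_simp
    rw [hfun] at h3
    exact h3
  have hπ : (π : ℝ) ≠ 0 := Real.pi_ne_zero
  have hπ2 : (π : ℝ) ^ 2 ≠ 0 := pow_ne_zero 2 hπ
  rcases lt_or_ge t (1 / 2) with h | h
  · have hk := key (2 * t) ⟨by linarith, by linarith⟩ 0 (by push_cast; ring)
    have hval : 8 / π ^ 2 * (π ^ 2 * (t ^ 2 - t + 1 / 6)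
        - 1 / 4 * (π ^ 2 * ((2 * t) ^ 2 - 2 * t + 1 / 6))) = Cfun x := by
      rw [hCx, abs_of_nonpos (by linarith : t - 1 / 2 ≤ 0)]
      field_simp
      ring
    rwa [hval] at hk
  · have hk := key (2 * t - 1) ⟨by linarith, by linarith⟩ 1 (by push_cast; ring)
    have hval : 8 / π ^ 2 * (π ^ 2 * (t ^ 2 - t + 1 / 6)
        - 1 / 4 * (π ^ 2 * ((2 * t - 1) ^ 2 - (2 * t - 1) + 1 / 6))) = Cfun x := by
      rw [hCx, abs_of_nonneg (by linarith : 0 ≤ t - 1 / 2)]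
      field_simp
      ring
    rwa [hval] at hk

lemma Sfun_eq (x : ℝ) : Sfun x = Cfun (x - 1 / 4) := by
  unfold Sfun Cfun
  set t := Int.fract x with htdef
  have ht0 : 0 ≤ t := Int.fract_nonneg x
  have ht1 : t < 1 := Int.fract_lt_one x
  have hxt : x = t + (⌊x⌋ : ℝ) := by rw [htdef, Int.fract]; ring
  rcases lt_or_ge t (1 / 4) with h | h
  · have hfr : Int.fract (x - 1 / 4) = t + 3 / 4 := by
      have : x - 1 / 4 = (t + 3 / 4) + ((⌊x⌋ - 1 : ℤ) : ℝ) := by push_cast; linarith [hxt]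
      rw [this, Int.fract_add_intCast, Int.fract_eq_self.2 ⟨by linarith, by linarith⟩]
    rw [hfr]
    rw [abs_of_nonpos (by linarith : t - 1 / 4 ≤ 0),
      abs_of_nonneg (by linarith : (0:ℝ) ≤ 2 - 4 * -(t - 1 / 4)),
      abs_of_nonneg (by linarith : (0:ℝ) ≤ t + 3 / 4 - 1 / 2)]
    ring
  · have hfr : Int.fract (x - 1 / 4) = t - 1 / 4 := by
      have : x - 1 / 4 = (t - 1 / 4) + ((⌊x⌋ : ℤ) : ℝ) := by push_cast; linarith [hxt]
      rw [this, Int.fract_add_intCast, Int.fract_eq_self.2 ⟨by linarith, by linarith⟩]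
    rw [hfr]
    rw [abs_of_nonneg (by linarith : (0:ℝ) ≤ t - 1 / 4)]
    rcases lt_or_ge t (3 / 4) with h2 | h2
    · rw [abs_of_nonneg (by linarith : (0:ℝ) ≤ 2 - 4 * (t - 1 / 4)),
        abs_of_nonpos (by linarith : t - 1 / 4 - 1 / 2 ≤ 0)]
      ring
    · rw [abs_of_nonpos (by linarith : 2 - 4 * (t - 1 / 4) ≤ 0),
        abs_of_nonneg (by linarith : (0:ℝ) ≤ t - 1 / 4 - 1 / 2)]
      ring

lemma abs_Sfun_le (x : ℝ) : |Sfun x| ≤ 1 := by rw [Sfun_eq]; exact abs_Cfun_le _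

lemma measurable_Sfun : Measurable Sfun := by
  have : Sfun = fun x => Cfun (x - 1 / 4) := funext Sfun_eq
  rw [this]
  exact measurable_Cfun.comp (measurable_id.sub_const _)

lemma integral_cos_int (N : ℤ) (hN : N ≠ 0) (c : ℝ) :
    ∫ x in (0:ℝ)..1, Real.cos (2 * π * N * x + c) = 0 := by
  have hπ : (π : ℝ) ≠ 0 := Real.pi_ne_zero
  have ha : (2 * π * (N : ℝ)) ≠ 0 := by
    have : (N : ℝ) ≠ 0 := Int.cast_ne_zero.mpr hN
    positivity
  rw [integral_comp_mul_add Real.cos ha c, integral_cos]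
  have h1 : 2 * π * (N : ℝ) * 1 + c = c + N * (2 * π) := by ring
  have h0 : 2 * π * (N : ℝ) * 0 + c = c := by ring
  rw [h1, h0, Real.sin_add_int_mul_two_pi, sub_self, smul_zero]

lemma cos_mul_cos' (u v : ℝ) :
    Real.cos u * Real.cos v = (Real.cos (u - v) + Real.cos (u + v)) / 2 := by
  rw [Real.cos_sub, Real.cos_add]; ring

lemma integral_cos_cos (A B : ℕ) (hA : 0 < A) (hB : 0 < B) (p q : ℝ) :
    ∫ x in (0:ℝ)..1, Real.cos (2 * π * A * x + p) * Real.cos (2 * π * B * x + q)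
      = if A = B then Real.cos (p - q) / 2 else 0 := by
  have hprod : ∀ x : ℝ, Real.cos (2 * π * A * x + p) * Real.cos (2 * π * B * x + q)
      = (Real.cos (2 * π * ((A : ℝ) - B) * x + (p - q))
        + Real.cos (2 * π * ((A : ℝ) + B) * x + (p + q))) / 2 := by
    intro x
    have e1 : 2 * π * ((A : ℝ) - B) * x + (p - q)
        = (2 * π * (A : ℝ) * x + p) - (2 * π * (B : ℝ) * x + q) := by ring
    have e2 : 2 * π * ((A : ℝ) + B) * x + (p + q)
        = (2 * π * (A : ℝ) * x + p) + (2 * π * (B : ℝ) * x + q) := by ring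
    rw [e1, e2, cos_mul_cos']
  simp only [hprod]
  have hint1 : IntervalIntegrable (fun x => Real.cos (2 * π * ((A : ℝ) - B) * x + (p - q)))
      MeasureTheory.volume 0 1 :=
    (Real.continuous_cos.comp (by continuity)).intervalIntegrable 0 1
  have hint2 : IntervalIntegrable (fun x => Real.cos (2 * π * ((A : ℝ) + B) * x + (p + q)))
      MeasureTheory.volume 0 1 :=
    (Real.continuous_cos.comp (by continuity)).intervalIntegrable 0 1
  rw [intervalIntegral.integral_div, intervalIntegral.integral_add hint1 hint2]
  have hI2 : ∫ x in (0:ℝ)..1, Real.cos (2 * π * ((A : ℝ) + B) * x + (p + q)) = 0 := by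
    have hcast : ((A : ℝ) + B) = (((A : ℤ) + B : ℤ) : ℝ) := by push_cast; ring
    rw [hcast]
    exact integral_cos_int _ (by omega) _
  rw [hI2, add_zero]
  rcases eq_or_ne A B with h | h
  · subst h
    simp only [if_pos rfl]
    have : ∀ x : ℝ, Real.cos (2 * π * ((A : ℝ) - A) * x + (p - q)) = Real.cos (p - q) := by
      intro x; norm_num
    simp only [this]
    rw [intervalIntegral.integral_const]
    simp
  · rw [if_neg h]
    have hcast : ((A : ℝ) - B) = (((A : ℤ) - B : ℤ) : ℝ) := by push_cast; ring
    rw [hcast, integral_cos_int _ (by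
      intro hc
      apply h
      have : (A : ℤ) = B := by omega
      exact_mod_cast this) _]
    norm_num

lemma hasSum_C_shift (m : ℕ) (φ : ℝ) (x : ℝ) :
    HasSum (fun k : ℕ => aa k * Real.cos (2 * π * (((2 * k + 1) * m : ℕ) : ℝ) * x
        + -(2 * π * (2 * (k : ℝ) + 1) * φ))) (Cfun (m * x - φ)) := by
  have h := hasSum_C ((m : ℝ) * x - φ)
  convert h using 2 with k
  congr 1
  push_cast
  ring

lemma integral_C_cos (m : ℕ) (hm : 0 < m) (φ : ℝ) (B : ℕ) (hB : 0 < B) (q : ℝ) :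
    ∫ x in (0:ℝ)..1, Cfun (m * x - φ) * Real.cos (2 * π * B * x + q)
      = ∑' k : ℕ, aa k * (if (2 * k + 1) * m = B
          then Real.cos (-(2 * π * (2 * (k : ℝ) + 1) * φ) - q) / 2 else 0) := by
  have hs : HasSum (fun k : ℕ => ∫ x in (0:ℝ)..1,
      aa k * (Real.cos (2 * π * (((2 * k + 1) * m : ℕ) : ℝ) * x
          + -(2 * π * (2 * (k : ℝ) + 1) * φ)) * Real.cos (2 * π * B * x + q)))
      (∫ x in (0:ℝ)..1, Cfun (m * x - φ) * Real.cos (2 * π * B * x + q)) := by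
    apply intervalIntegral.hasSum_integral_of_dominated_convergence (fun k (_ : ℝ) => aa k)
    · intro k
      exact (Continuous.aestronglyMeasurable (by continuity))
    · intro k
      filter_upwards with t _
      rw [Real.norm_eq_abs, abs_mul, abs_mul, abs_of_nonneg (aa_nonneg k)]
      calc aa k * (|Real.cos _| * |Real.cos _|) ≤ aa k * (1 * 1) := by
            apply mul_le_mul_of_nonneg_left _ (aa_nonneg k)
            exact mul_le_mul (Real.abs_cos_le_one _) (Real.abs_cos_le_one _)
              (abs_nonneg _) zero_le_one
        _ = aa k := by ring
    · filter_upwards with t _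
      exact hasSum_aa.summable
    · exact intervalIntegrable_const
    · filter_upwards with t _
      simpa only [mul_assoc] using
        (hasSum_C_shift m φ t).mul_right (Real.cos (2 * π * (B : ℝ) * t + q))
  rw [← hs.tsum_eq]
  apply tsum_congr
  intro k
  rw [intervalIntegral.integral_const_mul,
    integral_cos_cos ((2 * k + 1) * m) B (Nat.mul_pos (by omega) hm) hB
      (-(2 * π * (2 * (k : ℝ) + 1) * φ)) q]

lemma integral_CC_master (m n : ℕ) (hm : 0 < m) (hn : 0 < n) (φ ψ : ℝ) :
    ∫ x in (0:ℝ)..1, Cfun (m * x - φ) * Cfun (n * x - ψ)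
      = ∑' l : ℕ, aa l * ∑' k : ℕ, aa k * (if (2 * k + 1) * m = (2 * l + 1) * n
          then Real.cos (-(2 * π * (2 * (k : ℝ) + 1) * φ)
            - -(2 * π * (2 * (l : ℝ) + 1) * ψ)) / 2 else 0) := by
  have hs : HasSum (fun l : ℕ => ∫ x in (0:ℝ)..1,
      aa l * (Cfun (m * x - φ) * Real.cos (2 * π * (((2 * l + 1) * n : ℕ) : ℝ) * x
          + -(2 * π * (2 * (l : ℝ) + 1) * ψ))))
      (∫ x in (0:ℝ)..1, Cfun (m * x - φ) * Cfun (n * x - ψ)) := by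
    apply intervalIntegral.hasSum_integral_of_dominated_convergence (fun l (_ : ℝ) => aa l)
    · intro l
      apply Measurable.aestronglyMeasurable
      apply Measurable.const_mul
      apply Measurable.mul
      · exact measurable_Cfun.comp ((measurable_id.const_mul _).sub_const φ)
      · exact (Real.continuous_cos.comp (by continuity)).measurable
    · intro l
      filter_upwards with t _
      rw [Real.norm_eq_abs, abs_mul, abs_mul, abs_of_nonneg (aa_nonneg l)]
      calc aa l * (|Cfun _| * |Real.cos _|) ≤ aa l * (1 * 1) := by
            apply mul_le_mul_of_nonneg_left _ (aa_nonneg l)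
            exact mul_le_mul (abs_Cfun_le _) (Real.abs_cos_le_one _) (abs_nonneg _) zero_le_one
        _ = aa l := by ring
    · filter_upwards with t _
      exact hasSum_aa.summable
    · exact intervalIntegrable_const
    · filter_upwards with t _
      have h := (hasSum_C_shift n ψ t).mul_left (Cfun ((m : ℝ) * t - φ))
      simpa only [mul_comm, mul_left_comm] using h
  rw [← hs.tsum_eq]
  apply tsum_congr
  intro l
  rw [intervalIntegral.integral_const_mul]
  congr 1
  rw [show (fun x : ℝ => Cfun ((m : ℝ) * x - φ)
        * Real.cos (2 * π * (((2 * l + 1) * n : ℕ) : ℝ) * x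
          + -(2 * π * (2 * (l : ℝ) + 1) * ψ)))
      = fun x : ℝ => Cfun ((m : ℝ) * x - φ)
        * Real.cos (2 * π * (((2 * l + 1) * n : ℕ) : ℝ) * x
          + -(2 * π * (2 * (l : ℝ) + 1) * ψ)) from rfl]
  exact integral_C_cos m hm φ ((2 * l + 1) * n) (Nat.mul_pos (by omega) hn)
    (-(2 * π * (2 * (l : ℝ) + 1) * ψ))

noncomputable def inC (i j l : ℕ) : ℝ :=
  ∑' k : ℕ, aa k * (if (2 * k + 1) * i = (2 * l + 1) * j then (1:ℝ)/2 else 0)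

noncomputable def PP (i j : ℕ) : ℝ := ∑' l : ℕ, aa l * inC i j l

lemma summable_aa_mul (g : ℕ → ℝ) (hg : ∀ k, |g k| ≤ 1/2) :
    Summable fun k => aa k * g k := by
  apply Summable.of_norm
  apply Summable.of_nonneg_of_le (fun k => norm_nonneg _) (fun k => ?_)
    (hasSum_aa.summable.mul_right (1/2))
  rw [Real.norm_eq_abs, abs_mul, abs_of_nonneg (aa_nonneg k)]
  exact mul_le_mul_of_nonneg_left (hg k) (aa_nonneg k)

lemma tsum_aa_mul_le_half (g : ℕ → ℝ) (hg : ∀ k, |g k| ≤ 1/2) :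
    ∑' k, aa k * g k ≤ 1/2 := by
  have h2 : ∑' k, aa k * (1/2 : ℝ) = 1/2 := by
    rw [(hasSum_aa.mul_right (1/2)).tsum_eq]; ring
  rw [← h2]
  apply Summable.tsum_le_tsum _ (summable_aa_mul g hg) (hasSum_aa.summable.mul_right (1/2))
  intro k
  exact mul_le_mul_of_nonneg_left ((le_abs_self _).trans (hg k)) (aa_nonneg k)

lemma abs_tsum_aa_mul_le (g h : ℕ → ℝ) (hg : ∀ k, |g k| ≤ h k) (hh : ∀ k, h k ≤ 1/2) :
    |∑' k, aa k * g k| ≤ ∑' k, aa k * h k := by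
  have hga : ∀ k, |g k| ≤ 1/2 := fun k => (hg k).trans (hh k)
  have hha : ∀ k, |h k| ≤ 1/2 := fun k => by
    rw [abs_of_nonneg ((abs_nonneg _).trans (hg k))]; exact hh k
  have hsg := summable_aa_mul g hga
  have hsh := summable_aa_mul h hha
  have habs : Summable fun k => |aa k * g k| := by
    simpa only [← Real.norm_eq_abs] using hsg.norm
  calc |∑' k, aa k * g k| ≤ ∑' k, |aa k * g k| := by
        simpa only [← Real.norm_eq_abs] using norm_tsum_le_tsum_norm hsg.norm
    _ ≤ ∑' k, aa k * h k := by
        apply Summable.tsum_le_tsum _ habs hsh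
        intro k
        rw [abs_mul, abs_of_nonneg (aa_nonneg k)]
        exact mul_le_mul_of_nonneg_left (hg k) (aa_nonneg k)

lemma ite_half_abs_le (c : Prop) [Decidable c] : |if c then (1:ℝ)/2 else 0| ≤ 1/2 := by
  split
  · rw [abs_of_nonneg (by norm_num : (0:ℝ) ≤ 1/2)]
  · simp

lemma ite_half_le (c : Prop) [Decidable c] : (if c then (1:ℝ)/2 else 0) ≤ 1/2 := by
  split <;> norm_num

lemma inC_nonneg (i j l : ℕ) : 0 ≤ inC i j l := by
  apply tsum_nonneg
  intro k
  apply mul_nonneg (aa_nonneg k)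
  split <;> norm_num

lemma inC_le_half (i j l : ℕ) : inC i j l ≤ 1/2 :=
  tsum_aa_mul_le_half _ (fun k => ite_half_abs_le _)

lemma abs_inC_le (i j l : ℕ) : |inC i j l| ≤ 1/2 := by
  rw [abs_of_nonneg (inC_nonneg i j l)]; exact inC_le_half i j l

lemma PP_nonneg (i j : ℕ) : 0 ≤ PP i j := by
  apply tsum_nonneg
  intro l
  exact mul_nonneg (aa_nonneg l) (inC_nonneg i j l)

lemma summable_PP_inner (i j : ℕ) : Summable fun l => aa l * inC i j l :=
  summable_aa_mul _ (fun l => abs_inC_le i j l)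

lemma integral_CC (i j : ℕ) (hi : 0 < i) (hj : 0 < j) :
    ∫ x in (0:ℝ)..1, Cfun (i * x) * Cfun (j * x) = PP i j := by
  have h := integral_CC_master i j hi hj 0 0
  simp only [mul_zero, neg_zero, sub_zero, Real.cos_zero] at h
  unfold PP inC
  rw [← h]

noncomputable def inS (i j l : ℕ) : ℝ :=
  ∑' k : ℕ, aa k * (if (2 * k + 1) * i = (2 * l + 1) * j
    then Real.cos (-(2 * π * (2 * (k : ℝ) + 1) * (1/4))
      - -(2 * π * (2 * (l : ℝ) + 1) * (1/4))) / 2 else 0)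

noncomputable def QQ (i j : ℕ) : ℝ := ∑' l : ℕ, aa l * inS i j l

lemma ite_cos_abs_le (c : Prop) [Decidable c] (θ : ℝ) :
    |if c then Real.cos θ / 2 else 0| ≤ if c then (1:ℝ)/2 else 0 := by
  split
  · rw [abs_div]
    have := Real.abs_cos_le_one θ
    rw [abs_of_nonneg (by norm_num : (0:ℝ) ≤ 2)]
    linarith
  · simp

lemma abs_inS_le (i j l : ℕ) : |inS i j l| ≤ inC i j l :=
  abs_tsum_aa_mul_le _ _ (fun k => ite_cos_abs_le _ _) (fun k => ite_half_le _)

lemma abs_QQ_le (i j : ℕ) : |QQ i j| ≤ PP i j :=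
  abs_tsum_aa_mul_le _ _ (fun l => abs_inS_le i j l) (fun l => inC_le_half i j l)

lemma integral_SS (i j : ℕ) (hi : 0 < i) (hj : 0 < j) :
    ∫ x in (0:ℝ)..1, Sfun (i * x) * Sfun (j * x) = QQ i j := by
  have hfun : (fun x : ℝ => Sfun (i * x) * Sfun (j * x))
      = fun x : ℝ => Cfun ((i : ℝ) * x - 1/4) * Cfun ((j : ℝ) * x - 1/4) := by
    funext x
    rw [Sfun_eq, Sfun_eq]
  rw [show (∫ x in (0:ℝ)..1, Sfun (i * x) * Sfun (j * x))
      = ∫ x in (0:ℝ)..1, Cfun ((i : ℝ) * x - 1/4) * Cfun ((j : ℝ) * x - 1/4) by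
    rw [hfun]]
  exact integral_CC_master i j hi hj (1/4) (1/4)

lemma sum_ite_range_le (N : ℕ) (A b : ℕ) (hb : 0 < b) :
    (∑ j ∈ Finset.range N, if A = b * (j + 1) then (1/2 : ℝ) else 0) ≤ 1/2 := by
  by_cases hex : ∃ j0, A = b * (j0 + 1)
  · obtain ⟨j0, hj0⟩ := hex
    have hiff : ∀ j : ℕ, (A = b * (j + 1)) ↔ j = j0 := by
      intro j
      constructor
      · intro h
        have := hj0.symm.trans h
        have := Nat.eq_of_mul_eq_mul_left hb this
        omega
      · rintro rfl
        exact hj0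
    simp only [hiff]
    rw [Finset.sum_ite_eq' (Finset.range N) j0 (fun _ => (1/2:ℝ))]
    split <;> norm_num
  · push_neg at hex
    have : ∀ j ∈ Finset.range N, (if A = b * (j + 1) then (1/2 : ℝ) else 0) = 0 := by
      intro j _
      rw [if_neg (hex j)]
    rw [Finset.sum_congr rfl this]
    simp

lemma sum_ite_range_nonneg (N : ℕ) (A b : ℕ) :
    0 ≤ ∑ j ∈ Finset.range N, if A = b * (j + 1) then (1/2 : ℝ) else 0 := by
  apply Finset.sum_nonneg
  intro j _
  split <;> norm_num

lemma summable_inC_inner (i j l : ℕ) :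
    Summable fun k => aa k * (if (2 * k + 1) * i = (2 * l + 1) * j then (1/2:ℝ) else 0) :=
  summable_aa_mul _ (fun k => ite_half_abs_le _)

lemma sum_range_inC_le (i : ℕ) (l : ℕ) (N : ℕ) :
    ∑ j ∈ Finset.range N, inC i (j + 1) l ≤ 1/2 := by
  unfold inC
  rw [← Summable.tsum_finsetSum (fun j _ => summable_inC_inner i (j+1) l)]
  have hterm : ∀ k : ℕ, (∑ j ∈ Finset.range N,
      aa k * (if (2 * k + 1) * i = (2 * l + 1) * (j + 1) then (1/2:ℝ) else 0))
      = aa k * (∑ j ∈ Finset.range N,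
        if (2 * k + 1) * i = (2 * l + 1) * (j + 1) then (1/2:ℝ) else 0) := by
    intro k
    rw [Finset.mul_sum]
  rw [show (fun k : ℕ => ∑ j ∈ Finset.range N,
      aa k * (if (2 * k + 1) * i = (2 * l + 1) * (j + 1) then (1/2:ℝ) else 0))
      = fun k : ℕ => aa k * (∑ j ∈ Finset.range N,
        if (2 * k + 1) * i = (2 * l + 1) * (j + 1) then (1/2:ℝ) else 0)
    from funext hterm]
  apply tsum_aa_mul_le_half
  intro k
  rw [abs_of_nonneg (sum_ite_range_nonneg N _ _)]
  exact sum_ite_range_le N ((2 * k + 1) * i) (2 * l + 1) (by omega)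

lemma sum_range_inC_nonneg (i : ℕ) (l : ℕ) (N : ℕ) :
    0 ≤ ∑ j ∈ Finset.range N, inC i (j + 1) l := by
  apply Finset.sum_nonneg
  intro j _
  exact inC_nonneg _ _ _

lemma sum_range_PP_le (i : ℕ) (N : ℕ) :
    ∑ j ∈ Finset.range N, PP i (j + 1) ≤ 1/2 := by
  unfold PP
  rw [← Summable.tsum_finsetSum (fun j _ => summable_PP_inner i (j+1))]
  rw [show (fun l : ℕ => ∑ j ∈ Finset.range N, aa l * inC i (j + 1) l)
      = fun l : ℕ => aa l * (∑ j ∈ Finset.range N, inC i (j + 1) l)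
    from funext (fun l => by rw [Finset.mul_sum])]
  apply tsum_aa_mul_le_half
  intro l
  rw [abs_of_nonneg (sum_range_inC_nonneg i l N)]
  exact sum_range_inC_le i l N

lemma summable_PP_row (i : ℕ) : Summable fun j => PP i (j + 1) :=
  summable_of_sum_range_le (fun _ => PP_nonneg _ _) (fun N => sum_range_PP_le i N)

lemma tsum_PP_row_le (i : ℕ) : ∑' j, PP i (j + 1) ≤ 1/2 :=
  Real.tsum_le_of_sum_range_le (fun _ => PP_nonneg _ _) (fun N => sum_range_PP_le i N)

lemma PP_diag (i : ℕ) (hi : 0 < i) : PP i i = 1/3 := by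
  have hinC : ∀ l, inC i i l = aa l * (1/2) := by
    intro l
    unfold inC
    rw [tsum_eq_single l]
    · rw [if_pos rfl]
    · intro k hk
      rw [if_neg, mul_zero]
      intro h
      have := Nat.eq_of_mul_eq_mul_right hi h
      omega
  unfold PP
  rw [show (fun l : ℕ => aa l * inC i i l) = fun l => aa l * aa l / 2
    from funext (fun l => by rw [hinC l]; ring)]
  exact hasSum_aasq.tsum_eq

lemma tsum_subtype_bound (i : ℕ) (hi : 0 < i) (f : ℕ → ℝ) (hf : Summable f)
    (hdiag : 3 * PP i i ≤ f (i - 1)) (hle : ∀ j, f j ≤ 3 * PP i (j + 1)) :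
    (∑' j : {j : ℕ // j + 1 ≠ i}, f (j : ℕ)) ≤ 1/2 := by
  have h1 : (∑' j : {j : ℕ // j + 1 ≠ i}, f (j : ℕ))
      = ∑' j : ℕ, Set.indicator {j : ℕ | j + 1 ≠ i} f j := by
    exact tsum_subtype {j : ℕ | j + 1 ≠ i} f
  have h2 : ∀ j : ℕ, Set.indicator {j : ℕ | j + 1 ≠ i} f j
      = if j = i - 1 then 0 else f j := by
    intro j
    rw [Set.indicator_apply]
    have hmem : (j ∈ {j : ℕ | j + 1 ≠ i}) ↔ ¬ (j = i - 1) := by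
      simp only [Set.mem_setOf_eq]
      omega
    by_cases h : j = i - 1
    · rw [if_pos h, if_neg (by rw [hmem]; exact not_not_intro h)]
    · rw [if_neg h, if_pos (hmem.mpr h)]
  rw [h1]
  rw [tsum_congr h2]
  have h3 := Summable.tsum_eq_add_tsum_ite hf (i - 1)
  have h4 : ∑' j : ℕ, (if j = i - 1 then 0 else f j) = (∑' j, f j) - f (i - 1) := by
    rw [h3]; ring
  rw [h4]
  have h5 : ∑' j, f j ≤ 3 * (1/2) := by
    have hs : Summable fun j => 3 * PP i (j + 1) := (summable_PP_row i).mul_left 3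
    calc ∑' j, f j ≤ ∑' j, 3 * PP i (j + 1) := Summable.tsum_le_tsum hle hf hs
      _ = 3 * ∑' j, PP i (j + 1) := by rw [tsum_mul_left]
      _ ≤ 3 * (1/2) := by linarith [tsum_PP_row_le i]
  have h6 : 3 * PP i i ≤ f (i - 1) := hdiag
  have h7 : PP i i = 1/3 := PP_diag i hi
  rw [h7] at h6
  linarith

lemma QQ_diag (i : ℕ) (hi : 0 < i) : QQ i i = PP i i := by
  unfold QQ PP
  apply tsum_congr; intro l
  congr 1
  unfold inS inC
  apply tsum_congr; intro k
  congr 1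
  by_cases h : (2 * k + 1) * i = (2 * l + 1) * i
  · rw [if_pos h, if_pos h]
    have hkl : k = l := by
      have := Nat.eq_of_mul_eq_mul_right hi h
      omega
    subst hkl
    rw [sub_self, Real.cos_zero]
  · rw [if_neg h, if_neg h]

end GramAux

open GramAux in
theorem gram_row_sum_bound (i : ℕ) (hi : 0 < i) :
    (∀ j : ℕ, 0 < j → 0 ≤ ∫ x in (0:ℝ)..1, Cfun (i * x) * Cfun (j * x)) ∧
    Summable (fun j : ℕ => 3 * ∫ x in (0:ℝ)..1, Cfun (i * x) * Cfun ((j + 1) * x)) ∧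
    (∑' j : {j : ℕ // j + 1 ≠ i}, 3 * ∫ x in (0:ℝ)..1,
        Cfun (i * x) * Cfun (((j : ℕ) + 1) * x)) ≤ 1 / 2 ∧
    (∑' j : ℕ, 3 * ∫ x in (0:ℝ)..1, Cfun (i * x) * Cfun ((j + 1) * x)) ≤ 3 / 2 ∧
    Summable (fun j : ℕ => 3 * |∫ x in (0:ℝ)..1, Sfun (i * x) * Sfun ((j + 1) * x)|) ∧
    (∑' j : {j : ℕ // j + 1 ≠ i}, 3 * |∫ x in (0:ℝ)..1,
        Sfun (i * x) * Sfun (((j : ℕ) + 1) * x)|) ≤ 1 / 2 := by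
  have hintC : ∀ j : ℕ, (∫ x in (0:ℝ)..1, Cfun (i * x) * Cfun (((j : ℝ) + 1) * x))
      = PP i (j + 1) := by
    intro j
    have h := integral_CC i (j + 1) hi (by omega)
    push_cast at h
    exact h
  have hintS : ∀ j : ℕ, (∫ x in (0:ℝ)..1, Sfun (i * x) * Sfun (((j : ℝ) + 1) * x))
      = QQ i (j + 1) := by
    intro j
    have h := integral_SS i (j + 1) hi (by omega)
    push_cast at h
    exact h
  refine ⟨?_, ?_, ?_, ?_, ?_, ?_⟩
  · intro j hj
    rw [integral_CC i j hi hj]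
    exact PP_nonneg i j
  · have heq : (fun j : ℕ => 3 * ∫ x in (0:ℝ)..1, Cfun (i * x) * Cfun (((j : ℝ) + 1) * x))
        = fun j : ℕ => 3 * PP i (j + 1) := funext fun j => by rw [hintC j]
    rw [heq]
    exact (summable_PP_row i).mul_left 3
  · have heq : (∑' j : {j : ℕ // j + 1 ≠ i}, 3 * ∫ x in (0:ℝ)..1,
        Cfun (i * x) * Cfun ((((j : ℕ) : ℝ) + 1) * x))
        = ∑' j : {j : ℕ // j + 1 ≠ i}, (fun n : ℕ => 3 * PP i (n + 1)) (j : ℕ) :=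
      tsum_congr fun j => by rw [hintC (j : ℕ)]
    rw [heq]
    apply tsum_subtype_bound i hi _ ((summable_PP_row i).mul_left 3)
    · rw [show i - 1 + 1 = i by omega]
    · intro j
      exact le_refl _
  · have heq : (fun j : ℕ => 3 * ∫ x in (0:ℝ)..1, Cfun (i * x) * Cfun (((j : ℝ) + 1) * x))
        = fun j : ℕ => 3 * PP i (j + 1) := funext fun j => by rw [hintC j]
    rw [heq]
    rw [tsum_mul_left]
    linarith [tsum_PP_row_le i]
  · have heq : (fun j : ℕ => 3 * |∫ x in (0:ℝ)..1, Sfun (i * x) * Sfun (((j : ℝ) + 1) * x)|)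
        = fun j : ℕ => 3 * |QQ i (j + 1)| := funext fun j => by rw [hintS j]
    rw [heq]
    apply Summable.of_nonneg_of_le (fun j => by positivity)
      (fun j => ?_) ((summable_PP_row i).mul_left 3)
    have := abs_QQ_le i (j + 1)
    linarith
  · have heq : (∑' j : {j : ℕ // j + 1 ≠ i}, 3 * |∫ x in (0:ℝ)..1,
        Sfun (i * x) * Sfun ((((j : ℕ) : ℝ) + 1) * x)|)
        = ∑' j : {j : ℕ // j + 1 ≠ i}, (fun n : ℕ => 3 * |QQ i (n + 1)|) (j : ℕ) :=
      tsum_congr fun j => by rw [hintS (j : ℕ)]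
    rw [heq]
    apply tsum_subtype_bound i hi (fun n : ℕ => 3 * |QQ i (n + 1)|)
    · apply Summable.of_nonneg_of_le (fun j => by positivity)
        (fun j => ?_) ((summable_PP_row i).mul_left 3)
      have := abs_QQ_le i (j + 1)
      linarith
    · rw [show i - 1 + 1 = i by omega, QQ_diag i hi,
        abs_of_nonneg (PP_nonneg i i)]
    · intro j
      have := abs_QQ_le i (j + 1)
      linarith
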